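/- Let r > 2/3, D > 0 and μ ∈ ℝ satisfy 2 + μ = (1/2)·√(2D(r + 1/10))·(q_{f,+}(r) − 2q_{f,−}(r)), and let q_f(ξ) = q_{f,+}(r)·φ(q_{f,+}(r)·√((r + 1/10)/D)·ξ). Then the function ξ ↦ e^{−((μ+2)/D)·ξ}·q_f′(ξ)² is integrable on ℝ, the function χ ↦ e^{−√2·(1/2 − q_{f,−}(r)/q_{f,+}(r))·χ}·φ′(χ)² is integrable on ℝ, and −(1/D)·∫_ℝ e^{−((μ+2)/D)ξ}·q_f′(ξ)² dξ = (q_{f,+}(r)²·(r + 1/10)/D²)·M̂, where M̂ = −(q_{f,+}(r)·D·√2·(q_{f,+}(r) − 2q_{f,−}(r))/(2(μ + 2)))·∫_ℝ e^{−√2(1/2 − q_{f,−}(r)/q_{f,+}(r))χ}·φ′(χ)² dχ; moreover this common value is strictly negative. (This is the Melnikov integral ∂_μQ_f along the heteroclinic front.) -/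

import Mathlib

open MeasureTheory

noncomputable section

/-- The Nagumo front profile `φ(χ) = 1/(1 + exp(−χ/√2))`. -/
def phi (χ : ℝ) : ℝ := 1 / (1 + Real.exp (-χ / Real.sqrt 2))

/-- `q_{f,+}(r) = 1 + √(r/(r + 1/10))`. -/
def qfp (r : ℝ) : ℝ := 1 + Real.sqrt (r / (r + 1/10))

/-- `q_{f,−}(r) = 1 − √(r/(r + 1/10))`. -/
def qfm (r : ℝ) : ℝ := 1 - Real.sqrt (r / (r + 1/10))

def phid (χ : ℝ) : ℝ :=
  Real.exp (-χ / Real.sqrt 2) / Real.sqrt 2 / (1 + Real.exp (-χ / Real.sqrt 2))^2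

lemma phi_hasDerivAt (χ : ℝ) : HasDerivAt phi (phid χ) χ := by
  have h1 : HasDerivAt (fun x : ℝ => -x / Real.sqrt 2) (-1 / Real.sqrt 2) χ := by
    simpa using (hasDerivAt_id χ).neg.div_const (Real.sqrt 2)
  have h2 : HasDerivAt (fun x : ℝ => 1 + Real.exp (-x / Real.sqrt 2))
      (Real.exp (-χ / Real.sqrt 2) * (-1 / Real.sqrt 2)) χ := h1.exp.const_add 1
  have hne : (1 : ℝ) + Real.exp (-χ / Real.sqrt 2) ≠ 0 := by positivity
  have h3 := h2.inv hne
  have hphi : phi = fun x => (1 + Real.exp (-x / Real.sqrt 2))⁻¹ := by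
    funext x; simp [phi, one_div]
  rw [hphi]
  refine HasDerivAt.congr_deriv h3 ?_
  have hs : Real.sqrt 2 ≠ 0 := by positivity
  unfold phid
  field_simp

lemma deriv_phi_eq : deriv phi = phid := funext fun χ => (phi_hasDerivAt χ).deriv

lemma phid_pos (χ : ℝ) : 0 < phid χ := by
  unfold phid
  have := Real.exp_pos (-χ / Real.sqrt 2)
  have h2 : (0:ℝ) < Real.sqrt 2 := by positivity
  positivity

lemma one_le_sqrt2 : (1:ℝ) ≤ Real.sqrt 2 := by
  rw [show (1:ℝ) = Real.sqrt 1 by simp]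
  exact Real.sqrt_le_sqrt (by norm_num)

lemma phid_le1 (χ : ℝ) : phid χ ≤ Real.exp (-χ / Real.sqrt 2) := by
  unfold phid
  rw [div_div]
  apply div_le_self (Real.exp_pos _).le
  nlinarith [Real.exp_pos (-χ / Real.sqrt 2), one_le_sqrt2,
    sq_nonneg (1 + Real.exp (-χ / Real.sqrt 2))]

lemma phid_le2 (χ : ℝ) : phid χ ≤ Real.exp (χ / Real.sqrt 2) := by
  unfold phid
  rw [div_div, div_le_iff₀ (by positivity)]
  set E := Real.exp (-χ / Real.sqrt 2) with hE
  have hprod : Real.exp (χ / Real.sqrt 2) * E = 1 := by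
    rw [hE, ← Real.exp_add]
    rw [show χ / Real.sqrt 2 + -χ / Real.sqrt 2 = 0 by ring, Real.exp_zero]
  have hEpos : 0 < E := Real.exp_pos _
  have hX : 0 < Real.exp (χ / Real.sqrt 2) := Real.exp_pos _
  have h' : E * E ≤ Real.sqrt 2 * (1 + E)^2 := by
    nlinarith [one_le_sqrt2, sq_nonneg (1 + E), hEpos]
  calc E = Real.exp (χ / Real.sqrt 2) * E * E := by rw [hprod, one_mul]
    _ ≤ Real.exp (χ / Real.sqrt 2) * (Real.sqrt 2 * (1 + E)^2) := by
        rw [mul_assoc]; exact mul_le_mul_of_nonneg_left h' hX.le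

lemma continuous_phid : Continuous phid := by
  have h1 : Continuous fun x : ℝ => Real.exp (-x / Real.sqrt 2) :=
    Real.continuous_exp.comp (continuous_neg.div_const _)
  exact ((h1.div_const _).div ((continuous_const.add h1).pow 2)
    (fun x => by positivity))

lemma integrable_exp_neg_abs : Integrable (fun x : ℝ => Real.exp (-|x|)) := by
  rw [← integrableOn_univ, ← Set.Iic_union_Ioi (a := (0:ℝ))]
  apply IntegrableOn.union
  · exact (integrableOn_exp_Iic 0).congr_fun
      (fun x hx => by rw [abs_of_nonpos hx, neg_neg]) measurableSet_Iic
  · exact (exp_neg_integrableOn_Ioi 0 one_pos).congr_fun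
      (fun x hx => by rw [abs_of_pos hx]; simp) measurableSet_Ioi

lemma integrable_exp_neg_mul_abs {ε : ℝ} (hε : 0 < ε) :
    Integrable (fun x : ℝ => Real.exp (-ε * |x|)) := by
  have h := integrable_exp_neg_abs.comp_mul_left' hε.ne'
  have he : (fun x : ℝ => Real.exp (-|ε * x|)) = fun x => Real.exp (-ε * |x|) := by
    funext x; rw [abs_mul, abs_of_pos hε, neg_mul]
  rwa [he] at h

lemma sqrt2_sq : Real.sqrt 2 * Real.sqrt 2 = 2 := Real.mul_self_sqrt (by norm_num)

lemma phid_sq_le1 (χ : ℝ) : (phid χ)^2 ≤ Real.exp (-Real.sqrt 2 * χ) := by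
  have h := pow_le_pow_left₀ (phid_pos χ).le (phid_le1 χ) 2
  refine h.trans (le_of_eq ?_)
  rw [sq, ← Real.exp_add]
  congr 1
  have hs : Real.sqrt 2 ≠ 0 := by positivity
  field_simp
  linear_combination χ * sqrt2_sq

lemma phid_sq_le2 (χ : ℝ) : (phid χ)^2 ≤ Real.exp (Real.sqrt 2 * χ) := by
  have h := pow_le_pow_left₀ (phid_pos χ).le (phid_le2 χ) 2
  refine h.trans (le_of_eq ?_)
  rw [sq, ← Real.exp_add]
  congr 1
  have hs : Real.sqrt 2 ≠ 0 := by positivity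
  field_simp
  linear_combination (-χ) * sqrt2_sq

lemma integrable_g {c : ℝ} (hc0 : 0 < c) (hc2 : c < Real.sqrt 2) :
    Integrable (fun χ : ℝ => Real.exp (-c * χ) * (phid χ)^2) := by
  have hmeas : AEStronglyMeasurable (fun χ : ℝ => Real.exp (-c * χ) * (phid χ)^2) volume :=
    ((Real.continuous_exp.comp (continuous_const.mul continuous_id)).mul
      (continuous_phid.pow 2)).aestronglyMeasurable
  refine (integrable_exp_neg_mul_abs (sub_pos.2 hc2)).mono' hmeas (ae_of_all _ fun χ => ?_)
  rw [Real.norm_eq_abs, abs_of_nonneg (by positivity)]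
  rcases le_or_gt 0 χ with h | h
  · calc Real.exp (-c * χ) * (phid χ)^2
        ≤ Real.exp (-c * χ) * Real.exp (-Real.sqrt 2 * χ) := by
          exact mul_le_mul_of_nonneg_left (phid_sq_le1 χ) (Real.exp_pos _).le
      _ = Real.exp (-(c + Real.sqrt 2) * χ) := by rw [← Real.exp_add]; ring_nf
      _ ≤ Real.exp (-(Real.sqrt 2 - c) * |χ|) := by
          rw [abs_of_nonneg h]; exact Real.exp_le_exp.2 (by nlinarith)
  · calc Real.exp (-c * χ) * (phid χ)^2
        ≤ Real.exp (-c * χ) * Real.exp (Real.sqrt 2 * χ) := by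
          exact mul_le_mul_of_nonneg_left (phid_sq_le2 χ) (Real.exp_pos _).le
      _ = Real.exp ((Real.sqrt 2 - c) * χ) := by rw [← Real.exp_add]; ring_nf
      _ ≤ Real.exp (-(Real.sqrt 2 - c) * |χ|) := by
          rw [abs_of_neg h]; exact Real.exp_le_exp.2 (by nlinarith)

lemma integral_g_pos {c : ℝ} (hc0 : 0 < c) (hc2 : c < Real.sqrt 2) :
    0 < ∫ χ : ℝ, Real.exp (-c * χ) * (phid χ)^2 := by
  refine (integral_pos_iff_support_of_nonneg (fun χ => by positivity)
    (integrable_g hc0 hc2)).2 ?_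
  have hsupp : (Function.support fun χ : ℝ => Real.exp (-c * χ) * (phid χ)^2) = Set.univ :=
    Set.eq_univ_of_forall fun χ => by
      have := phid_pos χ
      have := Real.exp_pos (-c * χ)
      simp only [Function.mem_support]
      positivity
  rw [hsupp]
  simp [Real.volume_univ]

theorem stmt13 (r D μ : ℝ) (hr : 2/3 < r) (hD : 0 < D)
    (hmatch : 2 + μ = (1/2) * Real.sqrt (2*D*(r + 1/10)) * (qfp r - 2 * qfm r)) :
    let qf : ℝ → ℝ := fun ξ => qfp r * phi (qfp r * Real.sqrt ((r + 1/10) / D) * ξ)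
    let af : ℝ := Real.sqrt 2 * (1/2 - qfm r / qfp r)
    let Mhat : ℝ := -(qfp r * D * Real.sqrt 2 * (qfp r - 2 * qfm r) / (2 * (μ + 2))) *
      ∫ χ : ℝ, Real.exp (-af * χ) * (deriv phi χ)^2
    Integrable (fun ξ : ℝ => Real.exp (-((μ + 2)/D) * ξ) * (deriv qf ξ)^2) ∧
    Integrable (fun χ : ℝ => Real.exp (-af * χ) * (deriv phi χ)^2) ∧
    -(1/D) * ∫ ξ : ℝ, Real.exp (-((μ + 2)/D) * ξ) * (deriv qf ξ)^2
      = ((qfp r)^2 * (r + 1/10) / D^2) * Mhat ∧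
    ((qfp r)^2 * (r + 1/10) / D^2) * Mhat < 0 := by
  intro qf af Mhat
  have hqfdef : qf = fun ξ => qfp r * phi (qfp r * Real.sqrt ((r + 1/10) / D) * ξ) := rfl
  have hafdef : af = Real.sqrt 2 * (1/2 - qfm r / qfp r) := rfl
  have hMhatdef : Mhat = -(qfp r * D * Real.sqrt 2 * (qfp r - 2 * qfm r) / (2 * (μ + 2))) *
      ∫ χ : ℝ, Real.exp (-af * χ) * (deriv phi χ)^2 := rfl
  clear_value qf af Mhat
  set s : ℝ := Real.sqrt (r / (r + 1/10)) with hs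
  have hρ : (0:ℝ) < r + 1/10 := by linarith
  have hrpos : (0:ℝ) < r := by linarith
  have hs0 : 0 < s := by rw [hs]; exact Real.sqrt_pos.2 (by positivity)
  have hs2 : s < 1 := by
    have h1 : Real.sqrt (r / (r + 1/10)) < Real.sqrt 1 :=
      Real.sqrt_lt_sqrt (by positivity) (by rw [div_lt_one hρ]; linarith)
    rw [hs]; simpa using h1
  have hs1 : 1/3 < s := by
    rw [hs]
    calc (1/3:ℝ) = Real.sqrt ((1/3)^2) := (Real.sqrt_sq (by norm_num)).symm
      _ < Real.sqrt (r / (r + 1/10)) := Real.sqrt_lt_sqrt (by positivity)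
          (by rw [show ((1:ℝ)/3)^2 = 1/9 by norm_num, lt_div_iff₀ hρ]; linarith)
  have hqfp : qfp r = 1 + s := by unfold qfp; rw [hs]
  have hqfm : qfm r = 1 - s := by unfold qfm; rw [hs]
  have hppos : 0 < qfp r := by rw [hqfp]; linarith
  have hmm : qfp r - 2 * qfm r = 3*s - 1 := by rw [hqfp, hqfm]; ring
  have hmpos : 0 < qfp r - 2 * qfm r := by rw [hmm]; linarith
  obtain ⟨a, ha⟩ : ∃ a : ℝ, a = qfp r * Real.sqrt ((r + 1/10)/D) := ⟨_, rfl⟩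
  have ht1pos : 0 < Real.sqrt ((r + 1/10)/D) := Real.sqrt_pos.2 (by positivity)
  have hapos : 0 < a := by rw [ha]; exact mul_pos hppos ht1pos
  have hsqrt2pos : (0:ℝ) < Real.sqrt 2 := by positivity
  have haf0 : 0 < af := by
    rw [hafdef, hqfm, hqfp]
    have h1 : (1 - s)/(1 + s) < 1/2 := by rw [div_lt_iff₀ (by linarith)]; linarith
    exact mul_pos hsqrt2pos (by linarith)
  have haf2 : af < Real.sqrt 2 := by
    rw [hafdef]
    have h2 : 1/2 - qfm r / qfp r < 1 := by
      have : 0 < qfm r / qfp r := div_pos (by rw [hqfm]; linarith) hppos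
      linarith
    calc Real.sqrt 2 * (1/2 - qfm r / qfp r) < Real.sqrt 2 * 1 :=
          mul_lt_mul_of_pos_left h2 hsqrt2pos
      _ = Real.sqrt 2 := mul_one _
  have hsqrt3pos : 0 < Real.sqrt (2*D*(r+1/10)) := Real.sqrt_pos.2 (by positivity)
  have hμ2 : 0 < μ + 2 := by nlinarith [mul_pos hsqrt3pos hmpos]
  have hsq1 : Real.sqrt 2 * Real.sqrt ((r+1/10)/D) = Real.sqrt (2*D*(r+1/10)) / D := by
    rw [← Real.sqrt_mul (by norm_num : (0:ℝ) ≤ 2),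
      show (2:ℝ) * ((r+1/10)/D) = (2*D*(r+1/10))/D^2 by field_simp,
      Real.sqrt_div (by positivity), Real.sqrt_sq hD.le]
  have hkey : (μ+2)/D = af * a := by
    rw [hafdef, ha]
    have e1 : Real.sqrt 2 * (1/2 - qfm r/qfp r) * (qfp r * Real.sqrt ((r+1/10)/D))
        = (Real.sqrt 2 * Real.sqrt ((r+1/10)/D)) * ((qfp r - 2*qfm r)/2) := by
      field_simp
    rw [e1, hsq1, show μ + 2 = 2 + μ by ring, hmatch]
    field_simp
  have hqfderiv : deriv qf = fun ξ => qfp r * a * phid (a * ξ) := by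
    funext ξ
    have hinner : HasDerivAt (fun x : ℝ => a * x) a ξ := by
      simpa using (hasDerivAt_id ξ).const_mul a
    have h := ((phi_hasDerivAt (a * ξ)).comp ξ hinner).const_mul (qfp r)
    have hq : qf = fun x => qfp r * phi (a * x) := by rw [hqfdef, ha]
    rw [hq]
    have hd := h.deriv
    simp only [Function.comp] at hd
    rw [hd]; ring
  have hfun : (fun ξ : ℝ => Real.exp (-((μ + 2)/D) * ξ) * (deriv qf ξ)^2)
      = fun ξ => (qfp r * a)^2 * (Real.exp (-af * (a * ξ)) * (phid (a * ξ))^2) := by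
    funext ξ
    simp only [hqfderiv]
    rw [hkey, show -(af * a) * ξ = -af * (a * ξ) by ring]
    ring
  have hgint : Integrable (fun χ : ℝ => Real.exp (-af * χ) * (phid χ)^2) :=
    integrable_g haf0 haf2
  have hIpos : 0 < ∫ χ : ℝ, Real.exp (-af * χ) * (phid χ)^2 := integral_g_pos haf0 haf2
  have hchg : (∫ ξ : ℝ, Real.exp (-af * (a * ξ)) * (phid (a * ξ))^2)
      = |a⁻¹| * ∫ χ : ℝ, Real.exp (-af * χ) * (phid χ)^2 := by
    simpa [smul_eq_mul] using
      MeasureTheory.Measure.integral_comp_mul_left (fun χ => Real.exp (-af * χ) * (phid χ)^2) a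
  have hint1 : Integrable (fun ξ : ℝ => Real.exp (-((μ + 2)/D) * ξ) * (deriv qf ξ)^2) := by
    rw [hfun]
    exact (hgint.comp_mul_left' hapos.ne').const_mul _
  have hint2 : Integrable (fun χ : ℝ => Real.exp (-af * χ) * (deriv phi χ)^2) := by
    simpa only [deriv_phi_eq] using hgint
  have hMhat : Mhat = -(qfp r * D * Real.sqrt 2 * (qfp r - 2 * qfm r) / (2 * (μ + 2))) *
      ∫ χ : ℝ, Real.exp (-af * χ) * (phid χ)^2 := by
    rw [hMhatdef, deriv_phi_eq]
  have habs : |a⁻¹| = a⁻¹ := abs_of_pos (inv_pos.2 hapos)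
  have hIeq : (∫ ξ : ℝ, Real.exp (-((μ + 2)/D) * ξ) * (deriv qf ξ)^2)
      = (qfp r * a)^2 * (a⁻¹ * ∫ χ : ℝ, Real.exp (-af * χ) * (phid χ)^2) := by
    rw [hfun, MeasureTheory.integral_const_mul, hchg, habs]
  have h3 : -(1/D) * ∫ ξ : ℝ, Real.exp (-((μ + 2)/D) * ξ) * (deriv qf ξ)^2
      = ((qfp r)^2 * (r + 1/10) / D^2) * Mhat := by
    obtain ⟨Iv, hIv⟩ : ∃ I : ℝ, I = ∫ χ : ℝ, Real.exp (-af * χ) * (phid χ)^2 := ⟨_, rfl⟩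
    rw [← hIv] at hIeq hMhat
    rw [hIeq, hMhat]
    have ht1sq : Real.sqrt ((r + 1/10)/D) ^ 2 = (r + 1/10)/D :=
      Real.sq_sqrt (by positivity)
    have ha2 : a^2 * D = (qfp r)^2 * (r + 1/10) := by
      rw [ha, mul_pow, ht1sq]; field_simp
    have hafm : af * (2 * qfp r) = Real.sqrt 2 * (qfp r - 2 * qfm r) := by
      rw [hafdef]; field_simp
    have hμeq : μ + 2 = af * a * D := by
      rw [div_eq_iff hD.ne'] at hkey; rw [hkey]
    have hnum : qfp r * D * Real.sqrt 2 * (qfp r - 2 * qfm r) = 2 * af * (qfp r)^2 * D := by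
      linear_combination (-(qfp r * D)) * hafm
    rw [hμeq, hnum]
    have hane : a ≠ 0 := hapos.ne'
    have hafne : af ≠ 0 := haf0.ne'
    have hpne : qfp r ≠ 0 := hppos.ne'
    field_simp
    linear_combination (-10 * Iv) * ha2
  refine ⟨hint1, hint2, h3, ?_⟩
  rw [← h3, hIeq]
  have hpos : 0 < (qfp r * a)^2 * (a⁻¹ * ∫ χ : ℝ, Real.exp (-af * χ) * (phid χ)^2) :=
    mul_pos (pow_pos (mul_pos hppos hapos) 2) (mul_pos (inv_pos.2 hapos) hIpos)
  have hD2 : 0 < 1/D := by positivity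
  have := mul_pos hD2 hpos
  linarith
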